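/- Two random measures ξ and η on a measurable space (S, 𝒮) are zonoid equivalent if and only if E|∫ f dξ| = E|∫ f dη| for each measurable function f : S → ℝ with E ∫ |f| dξ < ∞ and E ∫ |f| dη < ∞. -/

import Mathlib

open MeasureTheory Filter
open scoped ENNReal Topology

set_option linter.unusedSectionVars false
namespace Stmt6Aux

variable {Ω S : Type*} [MeasurableSpace Ω] [MeasurableSpace S]

noncomputable def fSum (n : ℕ) (u : Fin n → ℝ) (A : Fin n → Set S) : S → ℝ :=
  fun x => ∑ i, Set.indicator (A i) (fun _ => u i) x

lemma measurable_fSum {n : ℕ} {u : Fin n → ℝ} {A : Fin n → Set S}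
    (hA : ∀ i, MeasurableSet (A i)) : Measurable (fSum n u A) :=
  Finset.measurable_sum _ fun i _ => measurable_const.indicator (hA i)

lemma abs_fSum_le {n : ℕ} {u : Fin n → ℝ} {A : Fin n → Set S} (x : S) :
    |fSum n u A x| ≤ ∑ i, Set.indicator (A i) (fun _ => |u i|) x := by
  refine (Finset.abs_sum_le_sum_abs _ _).trans ?_
  refine Finset.sum_le_sum fun i _ => ?_
  by_cases h : x ∈ A i <;>
    simp [Set.indicator_of_mem, Set.indicator_of_notMem, h]

lemma lintegral_fSum_le {n : ℕ} {u : Fin n → ℝ} {A : Fin n → Set S}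
    (hA : ∀ i, MeasurableSet (A i)) (μ : Measure S) :
    ∫⁻ x, ENNReal.ofReal |fSum n u A x| ∂μ ≤ ∑ i, ENNReal.ofReal |u i| * μ (A i) := by
  have step1 : ∀ x, ENNReal.ofReal |fSum n u A x| ≤
      ∑ i, Set.indicator (A i) (fun _ => ENNReal.ofReal |u i|) x := by
    intro x
    refine (ENNReal.ofReal_le_ofReal (abs_fSum_le x)).trans ?_
    rw [ENNReal.ofReal_sum_of_nonneg (fun i _ => Set.indicator_nonneg (fun _ _ => abs_nonneg _) _)]
    refine Finset.sum_le_sum fun i _ => ?_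
    by_cases h : x ∈ A i <;>
      simp [Set.indicator_of_mem, Set.indicator_of_notMem, h]
  calc ∫⁻ x, ENNReal.ofReal |fSum n u A x| ∂μ
      ≤ ∫⁻ x, ∑ i, Set.indicator (A i) (fun _ => ENNReal.ofReal |u i|) x ∂μ :=
        lintegral_mono step1
    _ = ∑ i, ∫⁻ x, Set.indicator (A i) (fun _ => ENNReal.ofReal |u i|) x ∂μ :=
        lintegral_finset_sum _ fun i _ => measurable_const.indicator (hA i)
    _ = ∑ i, ENNReal.ofReal |u i| * μ (A i) := by
        refine Finset.sum_congr rfl fun i _ => ?_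
        rw [lintegral_indicator (hA i), setLIntegral_const]

lemma integral_fSum {n : ℕ} {u : Fin n → ℝ} {A : Fin n → Set S}
    (hA : ∀ i, MeasurableSet (A i)) (μ : Measure S) (hfin : ∀ i, μ (A i) ≠ ⊤) :
    ∫ x, fSum n u A x ∂μ = ∑ i, u i * (μ (A i)).toReal := by
  unfold fSum
  rw [integral_finset_sum _ fun i _ => (integrable_indicator_iff (hA i)).2
    (integrableOn_const (hfin i))]
  refine Finset.sum_congr rfl fun i _ => ?_
  rw [integral_indicator_const _ (hA i), smul_eq_mul, mul_comm]
  rfl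




lemma simpleFunc_repr (g : SimpleFunc S ℝ) :
    ∃ (n : ℕ) (u : Fin n → ℝ) (A : Fin n → Set S),
      (∀ i, u i ≠ 0) ∧ (∀ i, A i = g ⁻¹' {u i}) ∧ Function.Injective u ∧
      ∀ x, g x = fSum n u A x := by
  classical
  set T : Finset ℝ := g.range.erase 0 with hT
  refine ⟨T.card, fun i => (T.equivFin.symm i : ℝ),
    fun i => g ⁻¹' {(T.equivFin.symm i : ℝ)}, ?_, fun i => rfl, ?_, ?_⟩
  · intro i
    exact Finset.ne_of_mem_erase (T.equivFin.symm i).2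
  · intro i j h
    exact T.equivFin.symm.injective (Subtype.ext h)
  · intro x
    by_cases hx : g x = 0
    · rw [hx]; symm
      refine Finset.sum_eq_zero fun i _ => ?_
      rw [Set.indicator_of_notMem]
      intro hmem
      exact Finset.ne_of_mem_erase (T.equivFin.symm i).2 (by rw [← hmem]; exact hx.symm ▸ hx)
    · have hxT : g x ∈ T := Finset.mem_erase.2 ⟨hx, g.mem_range_self x⟩
      set i₀ := T.equivFin ⟨g x, hxT⟩ with hi₀
      rw [fSum, Finset.sum_eq_single i₀]
      · have hmem : x ∈ g ⁻¹' {((T.equivFin.symm i₀ : T) : ℝ)} := by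
          simp only [Set.mem_preimage, Set.mem_singleton_iff, hi₀, Equiv.symm_apply_apply]
        rw [Set.indicator_of_mem hmem]
        simp [hi₀]
      · intro i _ hi
        rw [Set.indicator_of_notMem]
        intro hmem
        apply hi
        apply T.equivFin.symm.injective
        apply Subtype.ext
        have : g x = (T.equivFin.symm i : ℝ) := hmem
        simp [hi₀, ← this]
      · intro h; exact absurd (Finset.mem_univ i₀) h

lemma mass_lintegral_ne_top {P : Measure Ω} {ξ : Ω → Measure S} (hξ : Measurable ξ)
    {g : S → ℝ} (hg : Measurable g) {c : ℝ} (hc : c ≠ 0)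
    (h : ∫⁻ ω, ∫⁻ x, ENNReal.ofReal |g x| ∂(ξ ω) ∂P ≠ ⊤) :
    ∫⁻ ω, ξ ω (g ⁻¹' {c}) ∂P ≠ ⊤ := by
  have hAset : MeasurableSet (g ⁻¹' {c}) := hg (measurableSet_singleton c)
  have key : ∀ ω : Ω, ENNReal.ofReal |c| * ξ ω (g ⁻¹' {c}) ≤
      ∫⁻ x, ENNReal.ofReal |g x| ∂(ξ ω) := by
    intro ω
    calc ENNReal.ofReal |c| * ξ ω (g ⁻¹' {c})
        = ∫⁻ x in g ⁻¹' {c}, ENNReal.ofReal |c| ∂(ξ ω) := by rw [setLIntegral_const]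
      _ = ∫⁻ x in g ⁻¹' {c}, ENNReal.ofReal |g x| ∂(ξ ω) := by
          refine setLIntegral_congr_fun hAset (fun x hx => ?_)
          simp only [Set.mem_preimage, Set.mem_singleton_iff] at hx
          rw [hx]
      _ ≤ ∫⁻ x, ENNReal.ofReal |g x| ∂(ξ ω) := setLIntegral_le_lintegral _ _
  have hle : ENNReal.ofReal |c| * ∫⁻ ω, ξ ω (g ⁻¹' {c}) ∂P ≤
      ∫⁻ ω, ∫⁻ x, ENNReal.ofReal |g x| ∂(ξ ω) ∂P := by
    rw [← lintegral_const_mul' _ _ ENNReal.ofReal_ne_top]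
    exact lintegral_mono key
  intro htop
  rw [htop, ENNReal.mul_top (by simp [abs_ne_zero.2 hc, hc])] at hle
  exact h (top_le_iff.1 hle)

lemma ae_mass_lt_top {P : Measure Ω} {ξ : Ω → Measure S} (hξ : Measurable ξ)
    {A : Set S} (hA : MeasurableSet A) (h : ∫⁻ ω, ξ ω A ∂P ≠ ⊤) :
    ∀ᵐ ω ∂P, ξ ω A < ⊤ :=
  ae_lt_top ((Measure.measurable_coe hA).comp hξ) h



lemma ae_integral_fSum {P : Measure Ω} {ξ : Ω → Measure S} (hξ : Measurable ξ)
    {n : ℕ} {u : Fin n → ℝ} {A : Fin n → Set S} (hA : ∀ i, MeasurableSet (A i))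
    (hfin : ∀ i, ∫⁻ ω, ξ ω (A i) ∂P ≠ ⊤) :
    ∀ᵐ ω ∂P, ∫ x, fSum n u A x ∂(ξ ω) = ∑ i, u i * (ξ ω (A i)).toReal := by
  have h : ∀ᵐ ω ∂P, ∀ i, ξ ω (A i) < ⊤ :=
    ae_all_iff.2 fun i => ae_mass_lt_top hξ (hA i) (hfin i)
  filter_upwards [h] with ω hω
  exact integral_fSum hA _ fun i => (hω i).ne

lemma zonoid_simpleFunc {P : Measure Ω} {ξ η : Ω → Measure S}
    (hξ : Measurable ξ) (hη : Measurable η)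
    (hzon : ∀ (n : ℕ) (u : Fin n → ℝ) (A : Fin n → Set S),
      (∀ i, MeasurableSet (A i)) → Pairwise (Function.onFun Disjoint A) →
      (∀ i, ∫⁻ ω, ξ ω (A i) ∂P ≠ ⊤) → (∀ i, ∫⁻ ω, η ω (A i) ∂P ≠ ⊤) →
      ∫ ω, |∑ i, u i * (ξ ω (A i)).toReal| ∂P =
        ∫ ω, |∑ i, u i * (η ω (A i)).toReal| ∂P)
    (g : SimpleFunc S ℝ)
    (h1 : ∫⁻ ω, ∫⁻ x, ENNReal.ofReal |g x| ∂(ξ ω) ∂P ≠ ⊤)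
    (h2 : ∫⁻ ω, ∫⁻ x, ENNReal.ofReal |g x| ∂(η ω) ∂P ≠ ⊤) :
    ∫ ω, |∫ x, g x ∂(ξ ω)| ∂P = ∫ ω, |∫ x, g x ∂(η ω)| ∂P := by
  obtain ⟨n, u, A, hune, hAeq, huinj, hrepr⟩ := simpleFunc_repr g
  have hA : ∀ i, MeasurableSet (A i) := fun i =>
    (hAeq i) ▸ g.measurable (measurableSet_singleton _)
  have hdisj : Pairwise (Function.onFun Disjoint A) := by
    intro i j hij
    rw [Function.onFun, hAeq i, hAeq j]
    refine Set.disjoint_left.2 fun x hxi hxj => ?_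
    have e1 : g x = u i := hxi
    have e2 : g x = u j := hxj
    exact hij (huinj (e1.symm.trans e2))
  have hf1 : ∀ i, ∫⁻ ω, ξ ω (A i) ∂P ≠ ⊤ := fun i => by
    rw [hAeq i]; exact mass_lintegral_ne_top hξ g.measurable (hune i) h1
  have hf2 : ∀ i, ∫⁻ ω, η ω (A i) ∂P ≠ ⊤ := fun i => by
    rw [hAeq i]; exact mass_lintegral_ne_top hη g.measurable (hune i) h2
  have key := hzon n u A hA hdisj hf1 hf2
  have e1 : ∫ ω, |∫ x, g x ∂(ξ ω)| ∂P = ∫ ω, |∑ i, u i * (ξ ω (A i)).toReal| ∂P := by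
    refine integral_congr_ae ?_
    filter_upwards [ae_integral_fSum hξ hA hf1 (u := u)] with ω hω
    simp only [hrepr]
    rw [hω]
  have e2 : ∫ ω, |∫ x, g x ∂(η ω)| ∂P = ∫ ω, |∑ i, u i * (η ω (A i)).toReal| ∂P := by
    refine integral_congr_ae ?_
    filter_upwards [ae_integral_fSum hη hA hf2 (u := u)] with ω hω
    simp only [hrepr]
    rw [hω]
  rw [e1, e2, key]

lemma aesm_integral_simpleFunc {P : Measure Ω} {ξ : Ω → Measure S} (hξ : Measurable ξ)
    (g : SimpleFunc S ℝ)
    (h1 : ∫⁻ ω, ∫⁻ x, ENNReal.ofReal |g x| ∂(ξ ω) ∂P ≠ ⊤) :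
    AEStronglyMeasurable (fun ω => ∫ x, g x ∂(ξ ω)) P := by
  obtain ⟨n, u, A, hune, hAeq, huinj, hrepr⟩ := simpleFunc_repr g
  have hA : ∀ i, MeasurableSet (A i) := fun i =>
    (hAeq i) ▸ g.measurable (measurableSet_singleton _)
  have hf1 : ∀ i, ∫⁻ ω, ξ ω (A i) ∂P ≠ ⊤ := fun i => by
    rw [hAeq i]; exact mass_lintegral_ne_top hξ g.measurable (hune i) h1
  have hmeas : Measurable fun ω => ∑ i, u i * (ξ ω (A i)).toReal :=
    Finset.measurable_sum _ fun i _ =>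
      measurable_const.mul ((Measure.measurable_coe (hA i)).comp hξ).ennreal_toReal
  refine hmeas.aestronglyMeasurable.congr ?_
  filter_upwards [ae_integral_fSum hξ hA hf1 (u := u)] with ω hω
  simp only [hrepr]
  rw [hω]

lemma tendsto_side {P : Measure Ω} {ξ : Ω → Measure S} (hξ : Measurable ξ)
    {f : S → ℝ} (hf : Measurable f)
    (hfin : ∫⁻ ω, ∫⁻ x, ENNReal.ofReal |f x| ∂(ξ ω) ∂P ≠ ⊤)
    {g : ℕ → S → ℝ} (hgm : ∀ m, Measurable (g m))
    (hFm : ∀ m, AEStronglyMeasurable (fun ω => ∫ x, g m x ∂(ξ ω)) P)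
    (hg_le : ∀ m x, |g m x| ≤ 2 * |f x|)
    (hg_t : ∀ x, Tendsto (fun m => g m x) atTop (𝓝 (f x))) :
    Tendsto (fun m => ∫ ω, |∫ x, g m x ∂(ξ ω)| ∂P) atTop
      (𝓝 (∫ ω, |∫ x, f x ∂(ξ ω)| ∂P)) := by
  have hIm : Measurable fun ω => ∫⁻ x, ENNReal.ofReal |f x| ∂(ξ ω) :=
    (Measure.measurable_lintegral hf.abs.ennreal_ofReal).comp hξ
  have hae : ∀ᵐ ω ∂P, ∫⁻ x, ENNReal.ofReal |f x| ∂(ξ ω) < ⊤ := ae_lt_top hIm hfin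
  set B : Ω → ℝ := fun ω => 2 * (∫⁻ x, ENNReal.ofReal |f x| ∂(ξ ω)).toReal with hB
  have hBint : Integrable B P := by
    refine ⟨(hIm.ennreal_toReal.const_mul 2).aestronglyMeasurable, ?_⟩
    rw [hasFiniteIntegral_iff_norm]
    calc ∫⁻ ω, ENNReal.ofReal ‖B ω‖ ∂P
        ≤ ∫⁻ ω, 2 * ∫⁻ x, ENNReal.ofReal |f x| ∂(ξ ω) ∂P := by
          refine lintegral_mono fun ω => ?_
          rw [hB, Real.norm_eq_abs, abs_of_nonneg (by positivity),
            ENNReal.ofReal_mul (by norm_num)]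
          gcongr
          · simp
          · exact ENNReal.ofReal_toReal_le
      _ = 2 * ∫⁻ ω, ∫⁻ x, ENNReal.ofReal |f x| ∂(ξ ω) ∂P :=
          lintegral_const_mul' _ _ (by simp)
      _ < ⊤ := ENNReal.mul_lt_top (by simp) hfin.lt_top
  have habs : ∀ᵐ ω ∂P, Integrable f (ξ ω) ∧ Integrable (fun x => 2 * |f x|) (ξ ω) := by
    filter_upwards [hae] with ω hω
    have hfi : Integrable f (ξ ω) := by
      refine ⟨hf.aestronglyMeasurable, ?_⟩
      rw [hasFiniteIntegral_iff_norm]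
      simpa [Real.norm_eq_abs] using hω
    exact ⟨hfi, hfi.abs.const_mul 2⟩
  refine tendsto_integral_of_dominated_convergence B ?_ hBint ?_ ?_
  · intro m
    have := (hFm m).norm
    simpa [Real.norm_eq_abs] using this
  · intro m
    filter_upwards [habs] with ω hω
    obtain ⟨hfi, h2f⟩ := hω
    have hgi : Integrable (g m) (ξ ω) :=
      h2f.mono (hgm m).aestronglyMeasurable
        (ae_of_all _ fun x => by
          rw [Real.norm_eq_abs, Real.norm_eq_abs,
            abs_of_nonneg (by positivity : (0:ℝ) ≤ 2 * |f x|)]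
          exact hg_le m x)
    calc ‖|∫ x, g m x ∂(ξ ω)|‖ = |∫ x, g m x ∂(ξ ω)| := by
          rw [Real.norm_eq_abs, abs_abs]
      _ ≤ ∫ x, |g m x| ∂(ξ ω) := by
          simpa [Real.norm_eq_abs] using norm_integral_le_integral_norm (μ := ξ ω) (g m)
      _ ≤ ∫ x, 2 * |f x| ∂(ξ ω) := integral_mono hgi.abs h2f (fun x => hg_le m x)
      _ = B ω := by
          rw [hB, integral_const_mul,
            integral_eq_lintegral_of_nonneg_ae (ae_of_all _ fun x => abs_nonneg (f x))
              hf.abs.aestronglyMeasurable]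
  · filter_upwards [habs] with ω hω
    obtain ⟨hfi, h2f⟩ := hω
    have hinner : Tendsto (fun m => ∫ x, g m x ∂(ξ ω)) atTop (𝓝 (∫ x, f x ∂(ξ ω))) := by
      refine tendsto_integral_of_dominated_convergence (fun x => 2 * |f x|)
        (fun m => (hgm m).aestronglyMeasurable) h2f ?_ (ae_of_all _ hg_t)
      intro m
      refine ae_of_all _ fun x => ?_
      rw [Real.norm_eq_abs]
      exact hg_le m x
    exact ((continuous_abs.tendsto _).comp hinner)

end Stmt6Aux


/-- Two random measures are zonoid equivalent (equality of `E|Σ u_j ξ(A_j)|`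
over disjoint families with integrable masses) if and only if
`E|∫ f dξ| = E|∫ f dη|` for each measurable `f : S → ℝ` with
`E ∫ |f| dξ < ∞` and `E ∫ |f| dη < ∞`. -/

theorem stmt_6 {Ω S : Type*} [MeasurableSpace Ω] [MeasurableSpace S]
    (P : Measure Ω) [IsProbabilityMeasure P]
    (ξ η : Ω → Measure S) (hξ : Measurable ξ) (hη : Measurable η) :
    (∀ (n : ℕ) (u : Fin n → ℝ) (A : Fin n → Set S),
      (∀ i, MeasurableSet (A i)) → Pairwise (Function.onFun Disjoint A) →
      (∀ i, ∫⁻ ω, ξ ω (A i) ∂P ≠ ⊤) → (∀ i, ∫⁻ ω, η ω (A i) ∂P ≠ ⊤) →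
      ∫ ω, |∑ i, u i * (ξ ω (A i)).toReal| ∂P =
        ∫ ω, |∑ i, u i * (η ω (A i)).toReal| ∂P)
    ↔
    (∀ f : S → ℝ, Measurable f →
      ∫⁻ ω, ∫⁻ x, ENNReal.ofReal |f x| ∂(ξ ω) ∂P ≠ ⊤ →
      ∫⁻ ω, ∫⁻ x, ENNReal.ofReal |f x| ∂(η ω) ∂P ≠ ⊤ →
      ∫ ω, |∫ x, f x ∂(ξ ω)| ∂P = ∫ ω, |∫ x, f x ∂(η ω)| ∂P) := by
  constructor
  · intro hzon f hf hξf hηf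
    set g : ℕ → SimpleFunc S ℝ :=
      fun m => SimpleFunc.approxOn f hf Set.univ 0 (Set.mem_univ 0) m with hg
    have hgle : ∀ m x, |(g m) x| ≤ 2 * |f x| := fun m x => by
      have := SimpleFunc.norm_approxOn_zero_le hf (Set.mem_univ 0) x m
      rw [Real.norm_eq_abs, Real.norm_eq_abs] at this
      have h2 : |(g m) x| = ‖(g m) x‖ := (Real.norm_eq_abs _).symm
      rw [h2]
      calc ‖(g m) x‖ ≤ |f x| + |f x| := by
            simpa [Real.norm_eq_abs] using
              SimpleFunc.norm_approxOn_zero_le hf (Set.mem_univ 0) x m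
        _ = 2 * |f x| := by ring
    have hgt : ∀ x, Tendsto (fun m => (g m) x) atTop (𝓝 (f x)) := fun x =>
      SimpleFunc.tendsto_approxOn hf _ (by simp)
    have hbound : ∀ (ζ : Ω → Measure S), Measurable ζ →
        ∫⁻ ω, ∫⁻ x, ENNReal.ofReal |f x| ∂(ζ ω) ∂P ≠ ⊤ →
        ∀ m, ∫⁻ ω, ∫⁻ x, ENNReal.ofReal |(g m) x| ∂(ζ ω) ∂P ≠ ⊤ := by
      intro ζ hζ hfin m
      have hle : ∀ ω, ∫⁻ x, ENNReal.ofReal |(g m) x| ∂(ζ ω) ≤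
          2 * ∫⁻ x, ENNReal.ofReal |f x| ∂(ζ ω) := fun ω => by
        rw [← lintegral_const_mul' _ _ (by simp : (2:ℝ≥0∞) ≠ ⊤)]
        refine lintegral_mono fun x => ?_
        calc ENNReal.ofReal |(g m) x| ≤ ENNReal.ofReal (2 * |f x|) :=
              ENNReal.ofReal_le_ofReal (hgle m x)
          _ = 2 * ENNReal.ofReal |f x| := by
              rw [ENNReal.ofReal_mul (by norm_num)]; norm_num
      have hle2 : ∫⁻ ω, ∫⁻ x, ENNReal.ofReal |(g m) x| ∂(ζ ω) ∂P ≤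
          2 * ∫⁻ ω, ∫⁻ x, ENNReal.ofReal |f x| ∂(ζ ω) ∂P := by
        rw [← lintegral_const_mul' _ _ (by simp : (2:ℝ≥0∞) ≠ ⊤)]
        exact lintegral_mono hle
      exact ne_top_of_le_ne_top (ENNReal.mul_ne_top (by simp) hfin) hle2
    have hξg := hbound ξ hξ hξf
    have hηg := hbound η hη hηf
    have t1 := Stmt6Aux.tendsto_side hξ hf hξf (fun m => (g m).measurable)
      (fun m => Stmt6Aux.aesm_integral_simpleFunc hξ (g m) (hξg m)) hgle hgt
    have t2 := Stmt6Aux.tendsto_side hη hf hηf (fun m => (g m).measurable)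
      (fun m => Stmt6Aux.aesm_integral_simpleFunc hη (g m) (hηg m)) hgle hgt
    have heq : ∀ m, ∫ ω, |∫ x, (g m) x ∂(ξ ω)| ∂P = ∫ ω, |∫ x, (g m) x ∂(η ω)| ∂P :=
      fun m => Stmt6Aux.zonoid_simpleFunc hξ hη hzon (g m) (hξg m) (hηg m)
    have t1' : Tendsto (fun m => ∫ ω, |∫ x, (g m) x ∂(η ω)| ∂P) atTop
        (𝓝 (∫ ω, |∫ x, f x ∂(ξ ω)| ∂P)) := by
      rw [show (fun m => ∫ ω, |∫ x, (g m) x ∂(η ω)| ∂P)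
          = fun m => ∫ ω, |∫ x, (g m) x ∂(ξ ω)| ∂P from funext fun m => (heq m).symm]
      exact t1
    exact tendsto_nhds_unique t1' t2
  · intro h n u A hA hdisj hξf hηf
    have hfm : Measurable (Stmt6Aux.fSum n u A) := Stmt6Aux.measurable_fSum hA
    have hbound : ∀ (ζ : Ω → Measure S), Measurable ζ →
        (∀ i, ∫⁻ ω, ζ ω (A i) ∂P ≠ ⊤) →
        ∫⁻ ω, ∫⁻ x, ENNReal.ofReal |Stmt6Aux.fSum n u A x| ∂(ζ ω) ∂P ≠ ⊤ := by
      intro ζ hζ hfin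
      have hle : ∫⁻ ω, ∫⁻ x, ENNReal.ofReal |Stmt6Aux.fSum n u A x| ∂(ζ ω) ∂P ≤
          ∑ i, ENNReal.ofReal |u i| * ∫⁻ ω, ζ ω (A i) ∂P := by
        calc ∫⁻ ω, ∫⁻ x, ENNReal.ofReal |Stmt6Aux.fSum n u A x| ∂(ζ ω) ∂P
            ≤ ∫⁻ ω, ∑ i, ENNReal.ofReal |u i| * ζ ω (A i) ∂P :=
              lintegral_mono fun ω => Stmt6Aux.lintegral_fSum_le hA (ζ ω)
          _ = ∑ i, ∫⁻ ω, ENNReal.ofReal |u i| * ζ ω (A i) ∂P :=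
              lintegral_finset_sum _ fun i _ =>
                measurable_const.mul ((Measure.measurable_coe (hA i)).comp hζ)
          _ = ∑ i, ENNReal.ofReal |u i| * ∫⁻ ω, ζ ω (A i) ∂P :=
              Finset.sum_congr rfl fun i _ => lintegral_const_mul' _ _ ENNReal.ofReal_ne_top
      refine ne_top_of_le_ne_top ?_ hle
      refine (ENNReal.sum_lt_top.2 fun i _ => ?_).ne
      exact ENNReal.mul_lt_top ENNReal.ofReal_lt_top (hfin i).lt_top
    have e1 : ∫ ω, |∑ i, u i * (ξ ω (A i)).toReal| ∂P =
        ∫ ω, |∫ x, Stmt6Aux.fSum n u A x ∂(ξ ω)| ∂P :=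
      integral_congr_ae
        ((Stmt6Aux.ae_integral_fSum hξ hA hξf (u := u)).mono fun ω hω => by dsimp only; rw [hω])
    have e2 : ∫ ω, |∑ i, u i * (η ω (A i)).toReal| ∂P =
        ∫ ω, |∫ x, Stmt6Aux.fSum n u A x ∂(η ω)| ∂P :=
      integral_congr_ae
        ((Stmt6Aux.ae_integral_fSum hη hA hηf (u := u)).mono fun ω hω => by dsimp only; rw [hω])
    rw [e1, e2]
    exact h _ hfm (hbound ξ hξ hξf) (hbound η hη hηf)
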